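/- (Quadratic majorization of the smooth hinge loss.) For a fixed t < 1 and all real u, ũ: φ(u) ≤ φ(ũ) + φ′(ũ)(u − ũ) + (u − ũ)², with equality at u = ũ. -/

import Mathlib

/-- The smooth (Huberized) hinge loss with bend parameter `t`. -/
noncomputable def smoothHinge (t u : ℝ) : ℝ :=
  if u ≤ t then (1 - t)^2 + 2*(1 - t)*(t - u)
  else if u ≤ 1 then (1 - u)^2
  else 0

/-- The derivative of the smooth hinge loss. -/
noncomputable def smoothHinge' (t u : ℝ) : ℝ :=
  if u ≤ t then -2*(1 - t)
  else if u ≤ 1 then -2*(1 - u)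
  else 0

/-- quadratic majorization of the smooth hinge loss: for `t < 1` and all
`u, ũ`, `φ(u) ≤ φ(ũ) + φ′(ũ)(u − ũ) + (u − ũ)²`, with equality at `u = ũ`. -/
theorem stmt_15 (t : ℝ) (ht : t < 1) (u v : ℝ) :
    smoothHinge t u ≤ smoothHinge t v + smoothHinge' t v * (u - v) + (u - v)^2 ∧
    smoothHinge t v = smoothHinge t v + smoothHinge' t v * (v - v) + (v - v)^2 := by
  constructor
  · unfold smoothHinge smoothHinge'
    split_ifs with h1 h2 h3 h4 h3 h4 <;> (try push_neg at *) <;> nlinarith [sq_nonneg (u-v), sq_nonneg (u-t), sq_nonneg (v-t), sq_nonneg (u-1), sq_nonneg (v-1), sq_nonneg (u+v-2)]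
  · ring
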